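/- arXiv:1110.3167 — 2 statements merged into one kernel-verified Lean document; each statement's English description precedes it below -/
import Mathlib

section
/- With X, u₃ as in the type-III example and the bilinear form ⟨v,w⟩ = vᵀQw for Q = [[0,0,0,-1],[0,0,-1,0],[0,1,0,0],[1,0,0,0]], define u₂ = (1/√3)·Xu₃ and ū₂ = conj(u₂). Then for every complex number z, -i·⟨exp(zX)ū₂, conj(exp(zX)ū₂)⟩ = 1 - 3|z|². -/
open Matrix Complex

set_option maxHeartbeats 4000000

theorem M2_eq :
    (!![-3, 3*I, 0, 0; I, -1, 4*I, 0; 0, I, 1, -3*I; 0, 0, -I, 3] :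
      Matrix (Fin 4) (Fin 4) ℂ) * !![-3, 3*I, 0, 0; I, -1, 4*I, 0; 0, I, 1, -3*I; 0, 0, -I, 3]
      = !![6, -12*I, -12, 0; -4*I, -6, 0, 12; -1, 0, -6, -12*I; 0, 1, -4*I, 6] := by
  ext i j
  fin_cases i <;> fin_cases j <;>
    simp [Matrix.mul_apply, Fin.sum_univ_four, Matrix.vecHead, Matrix.vecTail] <;> ring_nf <;> (try simp [Complex.I_sq]) <;> (try ring)

theorem M3_eq :
    (!![6, -12*I, -12, 0; -4*I, -6, 0, 12; -1, 0, -6, -12*I; 0, 1, -4*I, 6] :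
      Matrix (Fin 4) (Fin 4) ℂ) * !![-3, 3*I, 0, 0; I, -1, 4*I, 0; 0, I, 1, -3*I; 0, 0, -I, 3]
      = !![-6, 18*I, 36, 36*I; 6*I, 18, -36*I, 36; 3, -9*I, -18, -18*I; I, 3, -6*I, 6] := by
  ext i j
  fin_cases i <;> fin_cases j <;>
    simp [Matrix.mul_apply, Fin.sum_univ_four, Matrix.vecHead, Matrix.vecTail] <;> ring_nf <;> (try simp [Complex.I_sq]) <;> (try ring)

theorem M4_eq :
    (!![-6, 18*I, 36, 36*I; 6*I, 18, -36*I, 36; 3, -9*I, -18, -18*I; I, 3, -6*I, 6] :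
      Matrix (Fin 4) (Fin 4) ℂ) * !![-3, 3*I, 0, 0; I, -1, 4*I, 0; 0, I, 1, -3*I; 0, 0, -I, 3] = 0 := by
  ext i j
  fin_cases i <;> fin_cases j <;>
    simp [Matrix.mul_apply, Fin.sum_univ_four, Matrix.vecHead, Matrix.vecTail] <;> ring_nf <;> (try simp [Complex.I_sq]) <;> (try ring)

theorem exp_nil4 (A : Matrix (Fin 4) (Fin 4) ℂ) (h : A ^ 4 = 0) :
    NormedSpace.exp A = 1 + A + (1/2 : ℂ) • A ^ 2 + (1/6 : ℂ) • A ^ 3 := by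
  rw [NormedSpace.exp_eq_tsum ℂ]
  have h0 : ∀ n ∉ Finset.range 4, (n.factorial : ℂ)⁻¹ • A ^ n = 0 := by
    intro n hn
    rw [Finset.mem_range, not_lt] at hn
    have : A ^ n = 0 := by
      calc A ^ n = A ^ 4 * A ^ (n - 4) := by rw [← pow_add]; congr 1; omega
        _ = 0 := by rw [h, zero_mul]
    simp [this]
  beta_reduce
  rw [tsum_eq_sum h0]
  simp [Finset.sum_range_succ, Nat.factorial]

/-- For the type-III example, -i⟨exp(zX)ū₂, conj(exp(zX)ū₂)⟩ = 1 - 3|z|². -/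
theorem typeIII_expX_u2bar_pairing (z : ℂ) :
    let Q : Matrix (Fin 4) (Fin 4) ℂ :=
      !![0, 0, 0, -1; 0, 0, -1, 0; 0, 1, 0, 0; 1, 0, 0, 0]
    let X : Matrix (Fin 4) (Fin 4) ℂ :=
      (1/2 : ℂ) • !![-3, 3*I, 0, 0; I, -1, 4*I, 0; 0, I, 1, -3*I; 0, 0, -I, 3]
    let u₃ : Fin 4 → ℂ := fun j => ((Real.sqrt 3 : ℂ)/12) * ![6, 6*I, -3, I] j
    let u₂ : Fin 4 → ℂ := (1/(Real.sqrt 3 : ℂ)) • X.mulVec u₃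
    let ub₂ : Fin 4 → ℂ := fun j => starRingEnd ℂ (u₂ j)
    let w : Fin 4 → ℂ := (NormedSpace.exp (z • X)).mulVec ub₂
    (-I) * (w ⬝ᵥ Q.mulVec (fun j => starRingEnd ℂ (w j))) = 1 - 3 * ‖z‖ ^ 2 := by
  intro Q X u₃ u₂ ub₂ w
  set M : Matrix (Fin 4) (Fin 4) ℂ :=
    !![-3, 3*I, 0, 0; I, -1, 4*I, 0; 0, I, 1, -3*I; 0, 0, -I, 3] with hM
  set M₂ : Matrix (Fin 4) (Fin 4) ℂ :=
    !![6, -12*I, -12, 0; -4*I, -6, 0, 12; -1, 0, -6, -12*I; 0, 1, -4*I, 6] with hM₂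
  set M₃ : Matrix (Fin 4) (Fin 4) ℂ :=
    !![-6, 18*I, 36, 36*I; 6*I, 18, -36*I, 36; 3, -9*I, -18, -18*I; I, 3, -6*I, 6] with hM₃
  have hp2 : M ^ 2 = M₂ := by rw [pow_two]; exact M2_eq
  have hp3 : M ^ 3 = M₃ := by rw [pow_succ, hp2]; exact M3_eq
  have hp4 : M ^ 4 = 0 := by rw [pow_succ, hp3]; exact M4_eq
  have hzX : z • X = (z/2) • M := by
    simp only [X, smul_smul, ← hM]; congr 1; ring
  have hX4 : (z • X) ^ 4 = 0 := by
    rw [hzX, smul_pow, hp4, smul_zero]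
  have hexp2 : NormedSpace.exp (z • X)
      = (1 : Matrix (Fin 4) (Fin 4) ℂ) + (z/2) • M + (z^2/8) • M₂ + (z^3/48) • M₃ := by
    rw [exp_nil4 _ hX4, hzX, smul_pow, smul_pow, hp2, hp3, smul_smul, smul_smul]
    congr 2 <;> ring_nf
  have hs3 : ((Real.sqrt 3 : ℝ) : ℂ) ≠ 0 := by
    norm_cast; positivity
  have hs3' : ((Real.sqrt 3 : ℝ) : ℂ) * ((Real.sqrt 3 : ℝ) : ℂ) = 3 := by
    norm_cast; rw [Real.mul_self_sqrt] <;> norm_num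
  have hu : ub₂ = ![(-3/2 : ℂ), I/2, -1/4, -I/4] := by
    have hv : X.mulVec u₃ = fun j => ((Real.sqrt 3 : ℝ) : ℂ) * ![(-3/2 : ℂ), -I/2, -1/4, I/4] j := by
      funext j
      simp only [X, u₃]
      fin_cases j <;>
        simp [Matrix.mulVec, dotProduct, Fin.sum_univ_four] <;> ring_nf <;> (try simp [Complex.I_sq]) <;> (try ring)
    have hu2 : u₂ = ![(-3/2 : ℂ), -I/2, -1/4, I/4] := by
      funext j
      simp only [u₂, hv, Pi.smul_apply, smul_eq_mul]
      field_simp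
    funext j
    simp only [ub₂, hu2]
    fin_cases j <;> simp [map_div₀, map_neg, map_ofNat, Complex.conj_I]
  have habs : ((‖z‖ : ℝ) : ℂ) ^ 2 = z * (starRingEnd ℂ) z := by
    rw [Complex.mul_conj]
    norm_cast
    exact Complex.sq_norm z
  have hw : w = ![(-3/2 + 3/2*z : ℂ), I/2 - 3/2*I*z, -1/4 - 3/4*z, -I/4 - 1/4*I*z] := by
    funext j
    simp only [w, hexp2, hu]
    fin_cases j <;>
      simp (config := { decide := true }) [Matrix.mulVec, dotProduct, Fin.sum_univ_four,
        Matrix.add_apply, hM, hM₂, hM₃, Matrix.smul_apply, Matrix.one_apply] <;>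
      ring_nf <;> (try simp [Complex.I_sq]) <;> (try ring)
  simp only [hw, Q]
  simp [Matrix.mulVec, dotProduct, Fin.sum_univ_four, Matrix.vecHead, Matrix.vecTail,
    map_add, _root_.map_mul, map_sub, map_neg, map_div₀, map_pow, _root_.map_one,
    map_zero, map_ofNat, Complex.conj_I]
  rw [habs]
  ring_nf
  simp only [Complex.I_sq]
  ring
end

section
/- For the 2×2 matrices n₋ = [[0,1],[0,0]], h = [[-1,0],[0,1]], n₊ = [[0,0],[1,0]], set X = (1/2)(i·n₋ - h + i·n₊). Then for all real y ≥ 0, the Möbius transformation associated to exp((y/(2+y))·X) sends i to (1+y)·i. -/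
open Matrix Complex

lemma exp_of_sq_zero (A : Matrix (Fin 2) (Fin 2) ℂ) (h : A * A = 0) :
    NormedSpace.exp A = 1 + A := by
  rw [NormedSpace.exp_eq_tsum ℂ]
  have hz : ∀ n ∉ ({0, 1} : Finset ℕ), ((((n.factorial : ℕ) : ℂ))⁻¹ • A ^ n) = 0 := by
    intro n hn
    have h2 : 2 ≤ n := by
      simp only [Finset.mem_insert, Finset.mem_singleton] at hn; omega
    have : A ^ n = 0 := by
      calc A ^ n = A ^ 2 * A ^ (n - 2) := by rw [← pow_add]; congr 1; omega
      _ = 0 := by rw [pow_two, h, zero_mul]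
    simp [this]
  rw [show (fun x : Matrix (Fin 2) (Fin 2) ℂ => ∑' n : ℕ, ((((n.factorial : ℕ) : ℂ))⁻¹ • x ^ n)) A = ∑' n : ℕ, ((((n.factorial : ℕ) : ℂ))⁻¹ • A ^ n) from rfl, tsum_eq_sum hz]
  simp [Finset.sum_pair (by norm_num : (0:ℕ) ≠ 1)]

/-- The Möbius transformation of exp((y/(2+y))X) sends i to (1+y)i, where
X = (1/2)(i n₋ - h + i n₊). -/
theorem expX_moebius_sends_i (y : ℝ) (hy : 0 ≤ y) :
    let nm : Matrix (Fin 2) (Fin 2) ℂ := !![0, 1; 0, 0]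
    let h : Matrix (Fin 2) (Fin 2) ℂ := !![-1, 0; 0, 1]
    let np : Matrix (Fin 2) (Fin 2) ℂ := !![0, 0; 1, 0]
    let X : Matrix (Fin 2) (Fin 2) ℂ := (1/2 : ℂ) • (I • nm - h + I • np)
    let g : Matrix (Fin 2) (Fin 2) ℂ := NormedSpace.exp (((y : ℂ)/(2 + y)) • X)
    (g 0 0 * I + g 0 1) / (g 1 0 * I + g 1 1) = (1 + y) * I := by
  intro nm h np X g
  set t : ℂ := (y : ℂ)/(2 + y) with ht
  have hX : X = !![1/2, I/2; I/2, -(1/2)] := by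
    simp only [X, nm, h, np]
    ext i j
    fin_cases i <;> fin_cases j <;> simp <;> ring
  have hsq : (t • X) * (t • X) = 0 := by
    rw [hX]
    ext i j
    fin_cases i <;> fin_cases j <;>
      simp [Matrix.mul_apply, Fin.sum_univ_succ, Matrix.smul_apply] <;> ring_nf <;>
      simp [Complex.I_sq] <;> ring
  have hg : g = 1 + t • X := exp_of_sq_zero _ hsq
  have h2y : (2 + (y : ℂ)) ≠ 0 := by
    intro hc
    have : (2 + y : ℝ) = 0 := by exact_mod_cast hc
    linarith
  have hg00 : g 0 0 = 1 + t/2 := by rw [hg, hX]; simp; ring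
  have hg01 : g 0 1 = t * I / 2 := by rw [hg, hX]; simp; ring
  have hg10 : g 1 0 = t * I / 2 := by rw [hg, hX]; simp; ring
  have hg11 : g 1 1 = 1 - t/2 := by rw [hg, hX]; simp; ring
  rw [hg00, hg01, hg10, hg11]
  have hden : t * I / 2 * I + (1 - t/2) = 1 - t := by
    have := Complex.I_sq
    field_simp
    ring_nf
    rw [Complex.I_sq]; ring
  rw [hden]
  have h1t : (1 : ℂ) - t = 2 / (2 + y) := by
    rw [ht]; field_simp; ring
  rw [h1t]
  rw [ht]
  field_simp
  ring
end
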